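/- Let p be an odd prime and let f(T) = ∏_{i∈S} (T - (1+p)^i + 1)^{r_i} for a finite set S of integers all congruent to j mod p-1 and positive integers r_i. Then for every integer n with n ≡ 1-j (mod p-1) and n + i ≠ 1 for all i ∈ S, v_p(f((1+p)^{1-n}-1)) = ∑_{i∈S} r_i·(1 + v_p(n+i-1)). -/

import Mathlib

section Aux

variable {p : ℕ} [hp : Fact p.Prime]

private lemma aux_val_q : padicValRat p (1 + (p : ℚ)) = 0 := by
  have heq : (1 + (p : ℚ)) = ((p + 1 : ℕ) : ℚ) := by push_cast; ring
  have hnd : ¬ p ∣ p + 1 := by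
    intro h
    have h1 : p ∣ (p + 1) - p := Nat.dvd_sub h (dvd_refl p)
    simp only [Nat.add_sub_cancel_left] at h1
    have := Nat.le_of_dvd one_pos h1
    have := hp.out.two_le
    omega
  rw [heq, padicValRat.of_nat, padicValNat.eq_zero_of_not_dvd hnd]
  simp

private lemma aux_q_pos : (0 : ℚ) < 1 + (p : ℚ) := by positivity

private lemma aux_zpow (q : ℚ) (hq : q ≠ 0) (m : ℤ) :
    padicValRat p (q ^ m) = m * padicValRat p q := by
  cases m with
  | ofNat k =>
      rw [Int.ofNat_eq_coe, zpow_natCast, padicValRat.pow q]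
      try push_cast
      try ring
  | negSucc k =>
      rw [zpow_negSucc, padicValRat.inv, padicValRat.pow q]
      push_cast [Int.negSucc_eq]
      try ring

private lemma aux_zpow_ne_one (m : ℤ) (hm : m ≠ 0) : (1 + (p : ℚ)) ^ m ≠ 1 := by
  have h1 : (1 : ℚ) < 1 + p := by
    have := hp.out.two_le
    have : (2 : ℚ) ≤ p := by exact_mod_cast this
    linarith
  intro h
  have h0 : (1 + (p : ℚ)) ^ m = (1 + (p : ℚ)) ^ (0 : ℤ) := by simpa using h
  exact hm (zpow_right_injective₀ aux_q_pos (ne_of_gt h1) h0)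

private lemma aux_nat (hodd : Odd p) (k : ℕ) (hk : k ≠ 0) :
    padicValRat p ((1 + (p : ℚ)) ^ k - 1) = 1 + padicValNat p k := by
  have hcast : (1 + (p : ℚ)) ^ k - 1 = (((p + 1) ^ k - 1 ^ k : ℕ) : ℚ) := by
    have h1 : 1 ^ k ≤ (p + 1) ^ k := Nat.pow_le_pow_left (by omega) k
    push_cast [Nat.cast_sub h1]
    ring
  rw [hcast, padicValRat.of_nat]
  have hyx : 1 < p + 1 := by have := hp.out.two_le; omega
  have hxy : p ∣ (p + 1) - 1 := by simp
  have hx : ¬ p ∣ p + 1 := by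
    intro h
    have h1 : p ∣ (p + 1) - p := Nat.dvd_sub h (dvd_refl p)
    simp only [Nat.add_sub_cancel_left] at h1
    have := Nat.le_of_dvd one_pos h1
    have := hp.out.two_le
    omega
  rw [padicValNat.pow_sub_pow hodd hyx hxy hx hk]
  simp [padicValNat_self]

private lemma aux_int (hodd : Odd p) (m : ℤ) (hm : m ≠ 0) :
    padicValRat p ((1 + (p : ℚ)) ^ m - 1) = 1 + padicValInt p m := by
  have hq0 : (1 + (p : ℚ)) ≠ 0 := ne_of_gt aux_q_pos
  rcases lt_or_gt_of_ne hm with hneg | hpos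
  · -- m < 0
    set k : ℕ := (-m).toNat with hkdef
    have hmk : m = -(k : ℤ) := by omega
    have hk : k ≠ 0 := by omega
    have hpow : (1 + (p : ℚ)) ^ m - 1
        = (1 - (1 + (p : ℚ)) ^ k) * ((1 + (p : ℚ)) ^ k)⁻¹ := by
      rw [hmk, zpow_neg, zpow_natCast]
      field_simp
    have hne1 : (1 : ℚ) - (1 + (p : ℚ)) ^ k ≠ 0 := by
      intro h
      apply aux_zpow_ne_one (p := p) (k : ℤ) (by exact_mod_cast hk)
      rw [zpow_natCast]; linarith [sub_eq_zero.mp h]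
    have hne2 : (((1 + (p : ℚ)) ^ k)⁻¹ : ℚ) ≠ 0 := by positivity
    rw [hpow, padicValRat.mul hne1 hne2, padicValRat.inv, padicValRat.pow _,
      aux_val_q]
    have : (1 : ℚ) - (1 + (p : ℚ)) ^ k = -((1 + (p : ℚ)) ^ k - 1) := by ring
    rw [this, padicValRat.neg, aux_nat hodd k hk]
    have habs : padicValInt p m = padicValNat p k := by
      unfold padicValInt
      congr 1
      omega
    rw [habs]; ring
  · -- m > 0
    set k : ℕ := m.toNat with hkdef
    have hmk : m = (k : ℤ) := by omega
    have hk : k ≠ 0 := by omega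
    rw [hmk, zpow_natCast, aux_nat hodd k hk, padicValInt.of_nat]

private lemma aux_prod {ι : Type*} (S : Finset ι) (F : ι → ℚ)
    (hF : ∀ i ∈ S, F i ≠ 0) :
    padicValRat p (∏ i ∈ S, F i) = ∑ i ∈ S, padicValRat p (F i) := by
  induction S using Finset.cons_induction with
  | empty => simp
  | cons a s ha ih =>
      rw [Finset.prod_cons, Finset.sum_cons,
        padicValRat.mul (hF a (Finset.mem_cons_self a s))
          (Finset.prod_ne_zero_iff.mpr fun i hi => hF i (Finset.mem_cons_of_mem hi)),
        ih fun i hi => hF i (Finset.mem_cons_of_mem hi)]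

end Aux

/-- Let `p` be an odd prime and `f(T) = ∏_{i∈S} (T - (1+p)^i + 1)^{r_i}` for a finite
set `S` of integers all congruent to `j mod p-1` and positive integers `r_i`.
For every `n ≡ 1-j (mod p-1)` with `n + i ≠ 1` for all `i ∈ S`,
`v_p(f((1+p)^{1-n}-1)) = ∑_{i∈S} r_i·(1 + v_p(n+i-1))`. -/
theorem statement18 (p : ℕ) [Fact p.Prime] (hp : Odd p) (j n : ℤ)
    (S : Finset ℤ) (r : ℤ → ℕ) (hr : ∀ i ∈ S, 0 < r i)
    (hS : ∀ i ∈ S, ((p : ℤ) - 1) ∣ (i - j))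
    (hn : ((p : ℤ) - 1) ∣ (n - (1 - j)))
    (hni : ∀ i ∈ S, n + i ≠ 1) :
    (∏ i ∈ S,
        (((1 + (p : ℚ_[p])) ^ (1 - n) - 1) - (1 + (p : ℚ_[p])) ^ i + 1) ^ (r i)).valuation
      = ∑ i ∈ S, (r i : ℤ) * (1 + (padicValInt p (n + i - 1) : ℤ)) := by
  have hq0 : (1 + (p : ℚ)) ≠ 0 := ne_of_gt aux_q_pos
  set F : ℤ → ℚ := fun i => (1 + (p : ℚ)) ^ (1 - n) - (1 + (p : ℚ)) ^ i with hF
  -- rewrite the ℚ_[p] product as a cast of a ℚ product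
  have hcast : (∏ i ∈ S,
        (((1 + (p : ℚ_[p])) ^ (1 - n) - 1) - (1 + (p : ℚ_[p])) ^ i + 1) ^ (r i))
      = (((∏ i ∈ S, (F i) ^ (r i)) : ℚ) : ℚ_[p]) := by
    push_cast
    refine Finset.prod_congr rfl fun i _ => ?_
    push_cast [hF]
    ring
  -- each factor of the ℚ product is nonzero and we know its valuation
  have hfac : ∀ i ∈ S, F i = (1 + (p : ℚ)) ^ i * ((1 + (p : ℚ)) ^ (1 - n - i) - 1) := by
    intro i _
    rw [hF, mul_sub, mul_one, ← zpow_add₀ hq0]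
    ring_nf
  have hFne : ∀ i ∈ S, F i ≠ 0 := by
    intro i hi
    rw [hfac i hi]
    refine mul_ne_zero (zpow_ne_zero _ hq0) ?_
    intro h
    exact aux_zpow_ne_one (1 - n - i) (by have := hni i hi; omega) (by linarith [sub_eq_zero.mp h])
  have hFval : ∀ i ∈ S, padicValRat p (F i) = 1 + padicValInt p (n + i - 1) := by
    intro i hi
    have hm : (1 : ℤ) - n - i ≠ 0 := by have := hni i hi; omega
    rw [hfac i hi, padicValRat.mul (zpow_ne_zero _ hq0)
        (sub_ne_zero.mpr (aux_zpow_ne_one _ hm)),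
      aux_zpow _ hq0, aux_val_q, aux_int hp _ hm]
    have : padicValInt p (1 - n - i) = padicValInt p (n + i - 1) := by
      unfold padicValInt
      congr 1
      omega
    rw [this]; ring
  rw [hcast, Padic.valuation_ratCast,
    aux_prod S (fun i => (F i) ^ (r i))
      (fun i hi => pow_ne_zero _ (hFne i hi))]
  refine Finset.sum_congr rfl fun i hi => ?_
  rw [padicValRat.pow _, hFval i hi]
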